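/- Suppose 0 < γ < γ̄ where γ̄ = (8/25)·μ / (K·L·(μ + L)). Then the IAG iterates converge globally linearly: there exists r ∈ [0, 1) such that dist_k ≤ r^k · dist_0 for all k ≥ 0. -/

import Mathlib

open InnerProductSpace Set Finset

local notation "⟪" x ", " y "⟫" => @inner ℝ _ _ x y

section Helpers

variable {E : Type*} [NormedAddCommGroup E] [InnerProductSpace ℝ E] [CompleteSpace E]

lemma my_gradient_sum {m : ℕ} (f : Fin m → E → ℝ)
    (hdiff : ∀ i, Differentiable ℝ (f i)) (w : E) :
    gradient (fun y => ∑ i, f i y) w = ∑ i, gradient (f i) w := by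
  have h : HasFDerivAt (fun y => ∑ i, f i y) (∑ i, fderiv ℝ (f i) w) w :=
    HasFDerivAt.fun_sum (fun i _ => (hdiff i w).hasFDerivAt)
  rw [gradient, h.fderiv, map_sum]
  rfl

omit [CompleteSpace E] in
lemma my_convex_line {φ : E → ℝ} (hc : ConvexOn ℝ Set.univ φ) {y z : E} {d : ℝ}
    (hd : HasDerivAt (fun t : ℝ => φ (z + t • (y - z))) d 0) : φ z + d ≤ φ y := by
  set A : ℝ →ᵃ[ℝ] E := AffineMap.lineMap z y with hA
  have hAt : ∀ t : ℝ, A t = z + t • (y - z) := by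
    intro t; rw [hA, AffineMap.lineMap_apply_module']; abel
  have hgc : ConvexOn ℝ Set.univ (φ ∘ A) := by
    have := hc.comp_affineMap A
    simpa using this
  have hd' : HasDerivAt (φ ∘ A) d 0 := by
    have : (φ ∘ A) = fun t : ℝ => φ (z + t • (y - z)) := by
      funext t; simp [Function.comp, hAt]
    rw [this]; exact hd
  have hs := hgc.le_slope_of_hasDerivAt (mem_univ (0:ℝ)) (mem_univ (1:ℝ)) one_pos hd'
  rw [slope_def_field] at hs
  have h0 : (φ ∘ A) 0 = φ z := by simp [hAt]
  have h1 : (φ ∘ A) 1 = φ y := by simp [hAt]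
  rw [h0, h1] at hs
  simp at hs
  linarith

lemma my_first_order {F : E → ℝ} (hFd : Differentiable ℝ F) {μ : ℝ}
    (hsc : ConvexOn ℝ Set.univ (fun y => F y - μ / 2 * ‖y‖ ^ 2)) (y z : E) :
    (F z - μ / 2 * ‖z‖ ^ 2) + (⟪gradient F z, y - z⟫ - μ * ⟪z, y - z⟫) ≤
      F y - μ / 2 * ‖y‖ ^ 2 := by
  have hpd : HasDerivAt (fun t : ℝ => z + t • (y - z)) (y - z) 0 := by
    simpa using ((hasDerivAt_id (0:ℝ)).smul_const (y - z)).const_add z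
  have h1 : HasDerivAt (fun t : ℝ => F (z + t • (y - z))) ⟪gradient F z, y - z⟫ 0 := by
    have hcomp := (hFd (z + (0:ℝ) • (y - z))).hasGradientAt.hasFDerivAt.comp_hasDerivAt 0 hpd
    simpa [toDual_apply_apply, Function.comp_def] using hcomp
  have h2 : HasDerivAt (fun t : ℝ => ‖(z + t • (y - z))‖ ^ 2) (2 * ⟪z, y - z⟫) 0 := by
    have := HasDerivAt.inner ℝ hpd hpd
    have h' : HasDerivAt (fun t : ℝ => ⟪z + t • (y - z), z + t • (y - z)⟫)
        (2 * ⟪z, y - z⟫) 0 := by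
      refine this.congr_deriv ?_
      simp [real_inner_comm]
      ring
    have heq : (fun t : ℝ => ⟪z + t • (y - z), z + t • (y - z)⟫)
        = fun t : ℝ => ‖(z + t • (y - z))‖ ^ 2 := by
      funext t; rw [real_inner_self_eq_norm_sq]
    rwa [heq] at h'
  have h3 : HasDerivAt (fun t : ℝ => F (z + t • (y - z)) - μ / 2 * ‖(z + t • (y - z))‖ ^ 2)
      (⟪gradient F z, y - z⟫ - μ * ⟪z, y - z⟫) 0 := by
    have := h1.sub (h2.const_mul (μ / 2))
    refine this.congr_deriv ?_
    ring
  exact my_convex_line hsc h3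

lemma my_strong_mono {F : E → ℝ} (hFd : Differentiable ℝ F) {μ : ℝ}
    (hsc : ConvexOn ℝ Set.univ (fun y => F y - μ / 2 * ‖y‖ ^ 2)) (y z : E) :
    μ * ‖y - z‖ ^ 2 ≤ ⟪gradient F y - gradient F z, y - z⟫ := by
  have hyz := my_first_order hFd hsc y z
  have hzy := my_first_order hFd hsc z y
  have e1 : (z - y : E) = -(y - z) := by abel
  rw [e1, inner_neg_right, inner_neg_right] at hzy
  have e2 : ⟪y, y - z⟫ - ⟪z, y - z⟫ = ‖y - z‖ ^ 2 := by
    rw [← inner_sub_left, real_inner_self_eq_norm_sq]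
  rw [inner_sub_left, ← e2, mul_sub]
  linarith

end Helpers

set_option maxHeartbeats 4000000 in
/-- Global linear convergence of the IAG method for stepsizes below the threshold
`γ̄ = (8/25)μ/(KL(μ+L))`. -/
theorem iag_global_linear_convergence
    (n m : ℕ) (hm : 1 ≤ m)
    (f : Fin m → EuclideanSpace ℝ (Fin n) → ℝ)
    (Li : Fin m → ℝ) (hLi : ∀ i, 0 ≤ Li i)
    (L : ℝ) (hL : L = ∑ i, Li i)
    (hconv : ∀ i, ConvexOn ℝ Set.univ (f i))
    (hdiff : ∀ i, Differentiable ℝ (f i))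
    (hlip : ∀ i y z, ‖gradient (f i) y - gradient (f i) z‖ ≤ Li i * ‖y - z‖)
    (K : ℕ) (hK : 1 ≤ K)
    (τ : Fin m → ℕ → ℕ)
    (hτ : ∀ i k, k - K ≤ τ i k ∧ τ i k ≤ k)
    (hτ0 : ∀ i, τ i 0 = 0)
    (F : EuclideanSpace ℝ (Fin n) → ℝ) (hF : F = fun y => ∑ i, f i y)
    (x g e : ℕ → EuclideanSpace ℝ (Fin n))
    (hg : ∀ k, g k = ∑ i, gradient (f i) (x (τ i k)))
    (he : ∀ k, e k = g k - gradient F (x k))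
    (γ : ℝ) (hγ : 0 < γ)
    (hx : ∀ k, x (k + 1) = x k - γ • g k)
    (μ : ℝ) (hμ : 0 < μ) (hμL : μ ≤ L)
    (hsc : ConvexOn ℝ Set.univ (fun y => F y - μ / 2 * ‖y‖ ^ 2))
    (xs : EuclideanSpace ℝ (Fin n))
    (hmin : ∀ y, F xs ≤ F y) (hgxs : gradient F xs = 0)
    (hγbar : γ < (8 / 25) * μ / (K * L * (μ + L))) :
    ∃ r : ℝ, 0 ≤ r ∧ r < 1 ∧ ∀ k, ‖x k - xs‖ ≤ r ^ k * ‖x 0 - xs‖ := by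
  have hL0 : (0:ℝ) < L := lt_of_lt_of_le hμ hμL
  have hK0 : (1:ℝ) ≤ (K:ℝ) := by exact_mod_cast hK
  have hKpos : (0:ℝ) < (K:ℝ) := by linarith
  have hμL0 : (0:ℝ) < μ + L := by linarith
  have hden : (0:ℝ) < (K:ℝ) * L * (μ + L) := by positivity
  have h1 : γ * ((K:ℝ) * L * (μ + L)) < 8 / 25 * μ := by
    rw [lt_div_iff₀ hden] at hγbar
    linarith
  set a := γ * μ with ha
  have hapos : 0 < a := mul_pos hγ hμ
  -- a ≤ 4/(25 K)
  have haK : 25 * (K:ℝ) * a ≤ 4 := by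
    have hX : (0:ℝ) < L * (μ + L) := mul_pos hL0 hμL0
    have key : 25 * (K:ℝ) * a * (L * (μ + L)) < 4 * (L * (μ + L)) := by
      nlinarith [mul_lt_mul_of_pos_right h1 hμ, mul_le_mul_of_nonneg_right hμL hμ.le,
        mul_le_mul hμL hμL hμ.le hL0.le]
    exact (lt_of_mul_lt_mul_right key hX.le).le
  have haa : a ≤ 4 / 25 := by nlinarith
  -- γ K L² ≤ 8/25 μ and γ L² ≤ 8/25 μ
  have hKL2 : γ * ((K:ℝ) * L ^ 2) ≤ 8 / 25 * μ := by
    nlinarith [mul_pos (mul_pos hγ hKpos) (mul_pos hL0 hμ)]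
  have hgL2 : γ * L ^ 2 ≤ 8 / 25 * μ := by
    nlinarith [mul_nonneg (sub_nonneg.mpr hK0) (mul_pos hγ (pow_pos hL0 2)).le]
  have hγ2L2 : γ ^ 2 * L ^ 2 ≤ 8 / 25 * a := by
    nlinarith [mul_le_mul_of_nonneg_left hgL2 hγ.le]
  set r := 1 - 2 / 5 * a with hrdef
  have hr1 : r < 1 := by rw [hrdef]; linarith
  have hr0 : 0 < r := by rw [hrdef]; linarith
  have hrle1 : r ≤ 1 := hr1.le
  -- Bernoulli: r^(2K) ≥ 109/125 ≥ 8/11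
  have hKne : (K:ℝ) ≠ 0 := by positivity
  have h8K : 8 / (125 * (K:ℝ)) ≤ 8 / 125 := by
    rw [div_le_div_iff₀ (by positivity) (by norm_num)]
    linarith
  have hc1 : 2 / 5 * a ≤ 8 / (125 * (K:ℝ)) := by
    rw [le_div_iff₀ (by positivity)]
    linarith
  have hrlow : 1 - 8 / (125 * (K:ℝ)) ≤ r := by rw [hrdef]; linarith
  have hlow0 : (0:ℝ) ≤ 1 - 8 / (125 * (K:ℝ)) := by linarith
  have hr2K : 8 / 11 ≤ r ^ (2 * K) := by
    have hbern := one_add_mul_le_pow (a := -(8 / (125 * (K:ℝ)))) (by linarith) (2 * K)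
    have hcalc : (1:ℝ) + (2 * K : ℕ) * (-(8 / (125 * (K:ℝ)))) = 1 - 16 / 125 := by
      push_cast
      field_simp
      ring
    rw [hcalc] at hbern
    have hmono := pow_le_pow_left₀ hlow0 hrlow (2 * K)
    have : (1:ℝ) + -(8 / (125 * (K:ℝ))) = 1 - 8 / (125 * (K:ℝ)) := by ring
    rw [this] at hbern
    linarith
  -- differentiability and gradient of F
  have hFdiff : Differentiable ℝ F := by
    rw [hF]
    exact Differentiable.fun_sum (fun i _ => hdiff i)
  have hFgrad : ∀ w, gradient F w = ∑ i, gradient (f i) w := by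
    intro w; rw [hF]; exact my_gradient_sum f hdiff w
  have hsum0 : ∑ i, gradient (f i) xs = 0 := by rw [← hFgrad xs]; exact hgxs
  have hFlip : ∀ y z, ‖gradient F y - gradient F z‖ ≤ L * ‖y - z‖ := by
    intro y z
    rw [hFgrad, hFgrad, ← Finset.sum_sub_distrib]
    calc ‖∑ i, (gradient (f i) y - gradient (f i) z)‖
        ≤ ∑ i, ‖gradient (f i) y - gradient (f i) z‖ := norm_sum_le _ _
      _ ≤ ∑ i, Li i * ‖y - z‖ := Finset.sum_le_sum (fun i _ => hlip i y z)
      _ = L * ‖y - z‖ := by rw [hL, Finset.sum_mul]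
  set D := ‖x 0 - xs‖ with hD
  have hD0 : 0 ≤ D := norm_nonneg _
  -- contraction of exact gradient step
  have hcontract : ∀ y, ‖(y - xs) - γ • gradient F y‖ ≤ (1 - 21 / 25 * a) * ‖y - xs‖ := by
    intro y
    have hm := my_strong_mono hFdiff hsc y xs
    rw [hgxs, sub_zero] at hm
    have hlf : ‖gradient F y‖ ≤ L * ‖y - xs‖ := by
      have := hFlip y xs; rwa [hgxs, sub_zero] at this
    have h0 : (0:ℝ) ≤ 1 - 21 / 25 * a := by linarith
    have hexp : ‖(y - xs) - γ • gradient F y‖ ^ 2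
        = ‖y - xs‖ ^ 2 - 2 * γ * ⟪gradient F y, y - xs⟫ + γ ^ 2 * ‖gradient F y‖ ^ 2 := by
      rw [norm_sub_sq_real, real_inner_smul_right, norm_smul, Real.norm_eq_abs, mul_pow,
        sq_abs, real_inner_comm]
      ring
    have hvsq : ‖gradient F y‖ ^ 2 ≤ (L * ‖y - xs‖) ^ 2 :=
      pow_le_pow_left₀ (norm_nonneg _) hlf 2
    have hsq : ‖(y - xs) - γ • gradient F y‖ ^ 2 ≤ ((1 - 21 / 25 * a) * ‖y - xs‖) ^ 2 := by
      rw [hexp]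
      have t1 : 2 * γ * (μ * ‖y - xs‖ ^ 2) ≤ 2 * γ * ⟪gradient F y, y - xs⟫ := by
        nlinarith
      have t2 : γ ^ 2 * ‖gradient F y‖ ^ 2 ≤ γ ^ 2 * L ^ 2 * ‖y - xs‖ ^ 2 := by
        nlinarith [sq_nonneg γ]
      have t3 : γ ^ 2 * L ^ 2 * ‖y - xs‖ ^ 2 ≤ 8 / 25 * a * ‖y - xs‖ ^ 2 := by
        nlinarith [sq_nonneg ‖y - xs‖]
      nlinarith [sq_nonneg (a * ‖y - xs‖), sq_nonneg ‖y - xs‖]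
    exact le_of_pow_le_pow_left₀ two_ne_zero (mul_nonneg h0 (norm_nonneg _)) hsq
  -- main strong induction
  have main : ∀ k, ∀ j, j ≤ k → ‖x j - xs‖ ≤ r ^ j * D := by
    intro k
    induction k with
    | zero =>
      intro j hj
      rw [Nat.le_zero.mp hj]
      simp [hD]
    | succ k IH =>
      intro j hj
      rcases Nat.lt_or_ge j (k + 1) with hlt | hge
      · exact IH j (Nat.lt_succ_iff.mp hlt)
      · have hj' : j = k + 1 := le_antisymm hj hge
        subst hj'
        -- bound on aggregated gradients
        have hgb : ∀ l, l ≤ k → ‖g l‖ ≤ L * (r ^ (l - K) * D) := by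
          intro l hl
          rw [hg l]
          calc ‖∑ i, gradient (f i) (x (τ i l))‖
              = ‖∑ i, (gradient (f i) (x (τ i l)) - gradient (f i) xs)‖ := by
                rw [Finset.sum_sub_distrib, hsum0, sub_zero]
            _ ≤ ∑ i, ‖gradient (f i) (x (τ i l)) - gradient (f i) xs‖ := norm_sum_le _ _
            _ ≤ ∑ i, Li i * (r ^ (l - K) * D) := by
                apply Finset.sum_le_sum
                intro i _
                refine le_trans (hlip i _ xs) (mul_le_mul_of_nonneg_left ?_ (hLi i))
                calc ‖x (τ i l) - xs‖ ≤ r ^ (τ i l) * D := IH _ (le_trans (hτ i l).2 hl)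
                  _ ≤ r ^ (l - K) * D := by
                      exact mul_le_mul_of_nonneg_right
                        (pow_le_pow_of_le_one hr0.le hrle1 (hτ i l).1) hD0
            _ = L * (r ^ (l - K) * D) := by rw [hL, Finset.sum_mul]
        set B := L * (r ^ (k - 2 * K) * D) with hBdef
        have hB0 : 0 ≤ B := by
          rw [hBdef]; positivity
        -- per-step gradient bound within the delay window
        have hgb2 : ∀ l, k - K ≤ l → l ≤ k → ‖g l‖ ≤ B := by
          intro l h1l h2l
          refine le_trans (hgb l h2l) ?_
          rw [hBdef]
          refine mul_le_mul_of_nonneg_left (mul_le_mul_of_nonneg_right ?_ hD0) hL0.le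
          exact pow_le_pow_of_le_one hr0.le hrle1 (by omega)
        -- telescoping
        have htel : ∀ p, k - K ≤ p → ∀ j, p + j ≤ k → ‖x (p + j) - x p‖ ≤ j * (γ * B) := by
          intro p hpk j
          induction j with
          | zero => simp
          | succ j IHj =>
            intro hpj
            have hprev : ‖x (p + j) - x p‖ ≤ j * (γ * B) := IHj (by omega)
            have hgl : ‖g (p + j)‖ ≤ B := hgb2 (p + j) (by omega) (by omega)
            have hxeq : x (p + (j + 1)) - x p = (x (p + j) - x p) - γ • g (p + j) := by
              have := hx (p + j)
              rw [show p + (j + 1) = (p + j) + 1 from rfl, this]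
              abel
            calc ‖x (p + (j + 1)) - x p‖
                ≤ ‖x (p + j) - x p‖ + ‖γ • g (p + j)‖ := by rw [hxeq]; exact norm_sub_le _ _
              _ ≤ j * (γ * B) + γ * B := by
                  rw [norm_smul, Real.norm_eq_abs, abs_of_pos hγ]
                  have := mul_le_mul_of_nonneg_left hgl hγ.le
                  linarith
              _ = (j + 1 : ℕ) * (γ * B) := by push_cast; ring
        have hdiffb : ∀ i, ‖x k - x (τ i k)‖ ≤ (K:ℝ) * (γ * B) := by
          intro i
          have hτ1 := (hτ i k).1
          have hτ2 := (hτ i k).2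
          have h2 := htel (τ i k) hτ1 (k - τ i k) (by omega)
          rw [show τ i k + (k - τ i k) = k from by omega] at h2
          refine le_trans h2 (mul_le_mul_of_nonneg_right ?_ (by positivity))
          have : (k - τ i k : ℕ) ≤ K := by omega
          exact_mod_cast this
        -- error bound
        have heb : ‖e k‖ ≤ L * ((K:ℝ) * (γ * B)) := by
          rw [he k, hg k, hFgrad (x k), ← Finset.sum_sub_distrib]
          calc ‖∑ i, (gradient (f i) (x (τ i k)) - gradient (f i) (x k))‖
              ≤ ∑ i, ‖gradient (f i) (x (τ i k)) - gradient (f i) (x k)‖ := norm_sum_le _ _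
            _ ≤ ∑ i, Li i * ((K:ℝ) * (γ * B)) := by
                apply Finset.sum_le_sum
                intro i _
                refine le_trans (hlip i _ _) (mul_le_mul_of_nonneg_left ?_ (hLi i))
                rw [norm_sub_rev]
                exact hdiffb i
            _ = L * ((K:ℝ) * (γ * B)) := by rw [hL, Finset.sum_mul]
        -- decomposition of the iterate
        have hxk1 : x (k + 1) - xs = ((x k - xs) - γ • gradient F (x k)) - γ • e k := by
          have hgk : g k = gradient F (x k) + e k := by rw [he k]; abel
          rw [hx k, hgk, smul_add]
          abel
        have hdk : ‖x k - xs‖ ≤ r ^ k * D := IH k le_rfl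
        have hc := hcontract (x k)
        have h0 : (0:ℝ) ≤ 1 - 21 / 25 * a := by linarith
        -- key comparison of powers
        have hQP : r ^ (k - 2 * K) * r ^ (2 * K) ≤ r ^ k := by
          rw [← pow_add]
          exact pow_le_pow_of_le_one hr0.le hrle1 (by omega)
        have hQ : r ^ (k - 2 * K) ≤ 11 / 8 * r ^ k := by
          have hQ0 : (0:ℝ) ≤ r ^ (k - 2 * K) := by positivity
          have h' := mul_le_mul_of_nonneg_left hr2K hQ0
          linarith
        have hEB : γ * (L * ((K:ℝ) * (γ * B))) ≤ 11 / 25 * a * (r ^ k * D) := by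
          rw [hBdef]
          have e1 : γ * (L * ((K:ℝ) * (γ * (L * (r ^ (k - 2 * K) * D)))))
              = (γ * ((K:ℝ) * L ^ 2)) * γ * (r ^ (k - 2 * K) * D) := by ring
          rw [e1]
          have e2 : (γ * ((K:ℝ) * L ^ 2)) * γ ≤ 8 / 25 * a := by
            rw [ha]
            have h'' := mul_le_mul_of_nonneg_right hKL2 hγ.le
            nlinarith [h'']
          calc (γ * ((K:ℝ) * L ^ 2)) * γ * (r ^ (k - 2 * K) * D)
              ≤ 8 / 25 * a * (r ^ (k - 2 * K) * D) := by
                refine mul_le_mul_of_nonneg_right e2 (by positivity)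
            _ ≤ 8 / 25 * a * (11 / 8 * r ^ k * D) := by
                refine mul_le_mul_of_nonneg_left ?_ (by positivity)
                exact mul_le_mul_of_nonneg_right hQ hD0
            _ = 11 / 25 * a * (r ^ k * D) := by ring
        calc ‖x (k + 1) - xs‖
            ≤ ‖(x k - xs) - γ • gradient F (x k)‖ + ‖γ • e k‖ := by
              rw [hxk1]; exact norm_sub_le _ _
          _ ≤ (1 - 21 / 25 * a) * (r ^ k * D) + γ * (L * ((K:ℝ) * (γ * B))) := by
              rw [norm_smul, Real.norm_eq_abs, abs_of_pos hγ]
              have hc' : ‖(x k - xs) - γ • gradient F (x k)‖ ≤ (1 - 21 / 25 * a) * (r ^ k * D) :=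
                le_trans hc (mul_le_mul_of_nonneg_left hdk h0)
              have he' : γ * ‖e k‖ ≤ γ * (L * ((K:ℝ) * (γ * B))) :=
                mul_le_mul_of_nonneg_left heb hγ.le
              linarith
          _ ≤ (1 - 21 / 25 * a) * (r ^ k * D) + 11 / 25 * a * (r ^ k * D) := by linarith
          _ = r * (r ^ k * D) := by rw [hrdef]; ring
          _ = r ^ (k + 1) * D := by ring
  exact ⟨r, hr0.le, hr1, fun k => main k k le_rfl⟩
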